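/- arXiv:1612.04450 — 2 statements merged into one kernel-verified Lean document; each statement's English description precedes it below -/
import Mathlib

section
/- For any poset E, the simplicial set κ*(E, ξE) is naturally isomorphic to the nerve N₁(E) of E. -/
open CategoryTheory

universe u

/-- A simplicial complex: a poset `E` together with a set `Φ` of nonempty finite linearly
ordered subsets of `E`, containing all singletons and closed under nonempty subsets. -/
structure SimpComplex : Type 1 where
  E : Type
  [ord : PartialOrder E]
  Φ : Set (Set E)
  finite : ∀ S ∈ Φ, S.Finite
  nonempty : ∀ S ∈ Φ, S.Nonempty
  chain : ∀ S ∈ Φ, ∀ x ∈ S, ∀ y ∈ S, x ≤ y ∨ y ≤ x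
  singleton_mem : ∀ x : E, {x} ∈ Φ
  down : ∀ S ∈ Φ, ∀ S' ⊆ S, S'.Nonempty → S' ∈ Φ

attribute [instance] SimpComplex.ord

/-- Morphisms of simplicial complexes: monotone maps sending simplices to simplices. -/
@[ext]
structure SCHom (K L : SimpComplex) where
  toFun : K.E → L.E
  mono : Monotone toFun
  mapΦ : ∀ S ∈ K.Φ, toFun '' S ∈ L.Φ

instance : Category SimpComplex where
  Hom := SCHom
  id K := ⟨id, monotone_id, by simpa using fun S hS => hS⟩
  comp f g := ⟨g.toFun ∘ f.toFun, g.mono.comp f.mono, by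
    intro S hS
    rw [Set.image_comp]
    exact g.mapΦ _ (f.mapΦ _ hS)⟩

theorem SCHom.hext {K L : SimpComplex} (f g : K ⟶ L) (h : f.toFun = g.toFun) : f = g :=
  SCHom.ext h

/-- The set of all nonempty finite chains of a poset. -/
def xiSet (E : Type) [PartialOrder E] : Set (Set E) :=
  {S | S.Finite ∧ S.Nonempty ∧ ∀ x ∈ S, ∀ y ∈ S, x ≤ y ∨ y ≤ x}

/-- The simplicial complex `(E, ξE)` associated to a poset `E`. -/
def SimpComplex.ofPoset (E : Type) [PartialOrder E] : SimpComplex where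
  E := E
  Φ := xiSet E
  finite := fun S hS => hS.1
  nonempty := fun S hS => hS.2.1
  chain := fun S hS => hS.2.2
  singleton_mem := fun x => ⟨Set.finite_singleton x, Set.singleton_nonempty x, by simp⟩
  down := by
    intro S hS S' hsub hne
    exact ⟨hS.1.subset hsub, hne, fun x hx y hy => hS.2.2 x (hsub hx) y (hsub hy)⟩

/-- The morphism of simplicial complexes induced by a monotone map of posets. -/
def SimpComplex.ofPosetMap {E F : Type} [PartialOrder E] [PartialOrder F] (f : E →o F) :
    SimpComplex.ofPoset E ⟶ SimpComplex.ofPoset F where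
  toFun := f
  mono := f.mono
  mapΦ := by
    intro S hS
    refine ⟨hS.1.image f, hS.2.1.image f, ?_⟩
    rintro - ⟨x, hx, rfl⟩ - ⟨y, hy, rfl⟩
    rcases hS.2.2 x hx y hy with h | h
    · exact Or.inl (f.mono h)
    · exact Or.inr (f.mono h)

/-- The cosimplicial object `Δ_n ↦ (Δ_n, ξΔ_n)` in simplicial complexes. -/
def kappa : SimplexCategory ⥤ SimpComplex where
  obj n := SimpComplex.ofPoset (Fin (n.len + 1))
  map f := SimpComplex.ofPosetMap f.toOrderHom
  map_id := by intro n; apply SCHom.hext; rfl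
  map_comp := by intro a b c f g; apply SCHom.hext; rfl

/-- The functor `κ* : SC ⥤ sSet`, `κ*(K)_n = Hom_SC(κ(Δ_n), K)`. -/
noncomputable def kappaStar : SimpComplex ⥤ SSet :=
    yoneda ⋙ (Functor.whiskeringLeft _ _ _).obj kappa.op


/-- A functor into a poset gives an SC-morphism from `(Δ_n, ξ)`. -/
def ofNerveSimplex {E : Type} [PartialOrder E] {n : ℕ} (F : ComposableArrows E n) :
    SimpComplex.ofPoset (Fin (n + 1)) ⟶ SimpComplex.ofPoset E :=
  SimpComplex.ofPosetMap ⟨F.obj, fun _ _ h => leOfHom (F.map (homOfLE h))⟩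

theorem functor_ext_poset {E : Type} [PartialOrder E] {n : ℕ}
    (F G : ComposableArrows E n) (h : ∀ i, F.obj i = G.obj i) : F = G :=
  CategoryTheory.Functor.ext h (fun _ _ _ => Subsingleton.elim _ _)

/-- The equivalence between `κ*(E, ξE)_n` and nerve simplices. -/
def simplexEquiv (E : Type) [PartialOrder E] (Δ : SimplexCategoryᵒᵖ) :
    ((kappaStar.obj (SimpComplex.ofPoset E)).obj Δ) ≃ ComposableArrows E (Δ.unop.len) where
  toFun f := Monotone.functor (show kappa.obj Δ.unop ⟶ SimpComplex.ofPoset E from f).mono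
  invFun F := (show kappa.obj Δ.unop ⟶ SimpComplex.ofPoset E from ofNerveSimplex F)
  left_inv f := SCHom.hext _ _ rfl
  right_inv F := functor_ext_poset _ _ (fun _ => rfl)

/-- For every poset `E`, the simplicial set `κ*(E, ξE)` is isomorphic to the nerve of
`E`, naturally in `E`. -/
theorem kappaStar_ofPoset_iso_nerve :
    ∃ φ : ∀ (E : Type) [PartialOrder E],
      (kappaStar.obj (SimpComplex.ofPoset E) ≅ nerveFunctor.obj (Cat.of E)),
    ∀ (E F : Type) [PartialOrder E] [PartialOrder F] (f : E →o F),
      (φ E).hom ≫ nerveFunctor.map (show Cat.of E ⟶ Cat.of F from f.monotone.functor.toCatHom) =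
        kappaStar.map (SimpComplex.ofPosetMap f) ≫ (φ F).hom := by
  refine ⟨fun E _ => NatIso.ofComponents (fun Δ => (simplexEquiv E Δ).toIso) ?_, ?_⟩
  · intro Δ Δ' g
    ext f
    exact functor_ext_poset (E := E) _ _ (fun _ => rfl)
  · intro E F _ _ f
    ext Δ x
    exact functor_ext_poset (E := F) _ _ (fun _ => rfl)
end

section
/- Let K be an augmented directed complex with basis. If the basis is strongly loop-free (the preorder ≤_N generated by: x ≤_N y whenever x ∈ supp(d(y)₋) or y ∈ supp(d(x)₊) is antisymmetric), then the basis is loop-free (for every i ≥ 0, the preorder ≤_i generated by: x ≤_i y whenever |x| > i, |y| > i and supp(⟨x⟩¹_i) ∩ supp(⟨y⟩⁰_i) ≠ ∅ is antisymmetric). -/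
/-- An augmented directed complex equipped with a basis, presented concretely: a graded
set `B` of basis elements, with chain groups the free abelian groups `B n →₀ ℤ`, the
positivity submonoids being the chains with nonnegative coordinates. -/
structure ADCB : Type 1 where
  B : ℕ → Type
  d : ∀ n, (B (n + 1) →₀ ℤ) →+ (B n →₀ ℤ)
  e : (B 0 →₀ ℤ) →+ ℤ
  dd : ∀ n, ((d n).comp (d (n + 1))) = 0
  ed : e.comp (d 0) = 0

namespace ADCB

variable (K : ADCB)

/-- The group of `n`-chains. -/
abbrev chain (n : ℕ) : Type := K.B n →₀ ℤ

/-- The positive part `x₊` of a chain. -/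
noncomputable def pPart {α : Type} (x : α →₀ ℤ) : α →₀ ℤ := x ⊔ 0

/-- The negative part `x₋` of a chain, so that `x = x₊ - x₋`. -/
noncomputable def nPart {α : Type} (x : α →₀ ℤ) : α →₀ ℤ := (-x) ⊔ 0

end ADCB

namespace ADCB

variable (K : ADCB)

/-- Auxiliary recursion computing the entries of the atom matrix: starting from a chain in
degree `k + j`, apply `j` times the differential followed by taking the positive
(`ε = true`) or negative (`ε = false`) part. -/
noncomputable def atomAux (ε : Bool) : ∀ (k j : ℕ), K.chain (k + j) → K.chain k
  | _, 0, x => x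
  | k, j + 1, x =>
      (if ε then pPart else nPart)
        (K.d k (atomAux ε (k + 1) j
          (cast (congrArg K.chain (by omega)) x)))

/-- The entry `⟨b⟩^ε_i` of the atom matrix of a basis element `b` of degree `m`, for
`i ≤ m`. -/
noncomputable def atom (ε : Bool) {m : ℕ} (b : K.B m) (i : ℕ) (h : i ≤ m) : K.chain i :=
  K.atomAux ε i (m - i) (cast (congrArg K.chain (by omega)) (Finsupp.single b 1))

/-- The generating relation of the preorder `≤_N`: `a ≤ b` if `a` occurs in the negative
part of `d b`, or `b` occurs in the positive part of `d a`. -/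
def relN (a b : Σ n, K.B n) : Prop :=
  (∃ h : b.1 = a.1 + 1, a.2 ∈ (nPart (K.d a.1 (Finsupp.single (h ▸ b.2) 1))).support) ∨
  (∃ h : a.1 = b.1 + 1, b.2 ∈ (pPart (K.d b.1 (Finsupp.single (h ▸ a.2) 1))).support)

/-- The basis is strongly loop-free if the preorder generated by `relN` is antisymmetric,
i.e. a partial order. -/
def StronglyLoopFree : Prop :=
  ∀ a b : Σ n, K.B n, Relation.ReflTransGen K.relN a b →
    Relation.ReflTransGen K.relN b a → a = b

/-- The generating relation of the preorder `≤_i`: `a ≤_i b` for basis elements of degree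
`> i` whose atoms `⟨a⟩¹_i` and `⟨b⟩⁰_i` have intersecting supports. -/
def relI (i : ℕ) (a b : Σ n, K.B n) : Prop :=
  ∃ (ha : i < a.1) (hb : i < b.1),
    ∃ c, c ∈ (K.atom true a.2 i ha.le).support ∧ c ∈ (K.atom false b.2 i hb.le).support

/-- The basis is loop-free if for every `i` the preorder generated by `relI i` is
antisymmetric, i.e. a partial order. -/
def LoopFree : Prop :=
  ∀ (i : ℕ) (a b : Σ n, K.B n), Relation.ReflTransGen (K.relI i) a b →
    Relation.ReflTransGen (K.relI i) b a → a = b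

end ADCB

namespace ADCB

lemma mem_support_pPart {α : Type} {x : α →₀ ℤ} {a : α} :
    a ∈ (pPart x).support ↔ 0 < x a := by
  rw [Finsupp.mem_support_iff]
  have : pPart x a = max (x a) 0 := rfl
  rw [this]; omega

lemma mem_support_nPart {α : Type} {x : α →₀ ℤ} {a : α} :
    a ∈ (nPart x).support ↔ x a < 0 := by
  rw [Finsupp.mem_support_iff]
  have : nPart x a = max (-(x a)) 0 := rfl
  rw [this]; omega

lemma d_apply_sum (K : ADCB) (n : ℕ) (w : K.chain (n + 1)) (c : K.B n) :
    (K.d n w) c = w.sum (fun x v => v * (K.d n (Finsupp.single x 1)) c) := by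
  conv_lhs => rw [← Finsupp.sum_single w, map_finsuppSum, Finsupp.sum_apply]
  refine Finsupp.sum_congr fun x hx => ?_
  have : Finsupp.single x (w x) = (w x) • Finsupp.single x 1 := by
    rw [Finsupp.smul_single']; ring_nf
  rw [this, map_zsmul]
  simp

lemma exists_pos {α : Type} (w : α →₀ ℤ) (hw : ∀ t, 0 ≤ w t) (g : α → ℤ)
    (hpos : 0 < w.sum (fun x v => v * g x)) :
    ∃ x ∈ w.support, 0 < g x := by
  by_contra hcon
  push_neg at hcon
  have : w.sum (fun x v => v * g x) ≤ 0 :=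
    Finset.sum_nonpos fun x hx => mul_nonpos_of_nonneg_of_nonpos (hw x) (hcon x hx)
  omega

lemma exists_neg {α : Type} (w : α →₀ ℤ) (hw : ∀ t, 0 ≤ w t) (g : α → ℤ)
    (hneg : w.sum (fun x v => v * g x) < 0) :
    ∃ x ∈ w.support, g x < 0 := by
  by_contra hcon
  push_neg at hcon
  have : 0 ≤ w.sum (fun x v => v * g x) :=
    Finset.sum_nonneg fun x hx => mul_nonneg (hw x) (hcon x hx)
  omega

lemma cast_nonneg' (K : ADCB) {m n : ℕ} (h : m = n) (z : K.chain m) (hz : ∀ t, 0 ≤ z t) :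
    ∀ t, 0 ≤ (cast (congrArg K.chain h) z) t := by subst h; exact hz

lemma cast_support (K : ADCB) {m n : ℕ} (h : m = n) (z : K.chain m) (x : K.B n)
    (hx : x ∈ (cast (congrArg K.chain h) z).support) :
    ∃ y ∈ z.support, (⟨n, x⟩ : Σ n, K.B n) = ⟨m, y⟩ := by
  subst h; exact ⟨x, hx, rfl⟩

lemma atomAux_nonneg (K : ADCB) (ε : Bool) : ∀ (j k : ℕ) (z : K.chain (k + j)),
    (∀ t, 0 ≤ z t) → ∀ t, 0 ≤ K.atomAux ε k j z t
  | 0, k, z, hz => hz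
  | j + 1, k, z, hz => by
    intro t
    rw [atomAux]
    cases ε
    · exact le_max_right _ _
    · exact le_max_right _ _

lemma atomAux_true_path (K : ADCB) : ∀ (j k : ℕ) (z : K.chain (k + j)), (∀ t, 0 ≤ z t) →
    ∀ c ∈ (K.atomAux true k j z).support, ∃ x ∈ z.support,
      Relation.ReflTransGen K.relN ⟨k + j, x⟩ ⟨k, c⟩
  | 0, k, z, hz, c, hc => ⟨c, hc, .refl⟩
  | j + 1, k, z, hz, c, hc => by
    rw [atomAux] at hc
    simp only [if_true] at hc
    rw [mem_support_pPart, K.d_apply_sum] at hc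
    have e : k + (j + 1) = k + 1 + j := by omega
    have hz' := K.cast_nonneg' e z hz
    have hw := K.atomAux_nonneg true j (k + 1) _ hz'
    obtain ⟨x, hxw, hxpos⟩ := exists_pos _ hw _ hc
    have step : K.relN ⟨k + 1, x⟩ ⟨k, c⟩ :=
      Or.inr ⟨rfl, mem_support_pPart.mpr hxpos⟩
    obtain ⟨x0, hx0, path⟩ := K.atomAux_true_path j (k + 1) _ hz' x hxw
    obtain ⟨y, hy, heq⟩ := K.cast_support e z x0 hx0
    rw [heq] at path
    exact ⟨y, hy, path.tail step⟩

lemma atomAux_false_path (K : ADCB) : ∀ (j k : ℕ) (z : K.chain (k + j)), (∀ t, 0 ≤ z t) →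
    ∀ c ∈ (K.atomAux false k j z).support, ∃ x ∈ z.support,
      Relation.ReflTransGen K.relN ⟨k, c⟩ ⟨k + j, x⟩
  | 0, k, z, hz, c, hc => ⟨c, hc, .refl⟩
  | j + 1, k, z, hz, c, hc => by
    rw [atomAux] at hc
    simp only [if_neg (by simp : ¬ (false = true))] at hc
    rw [mem_support_nPart, K.d_apply_sum] at hc
    have e : k + (j + 1) = k + 1 + j := by omega
    have hz' := K.cast_nonneg' e z hz
    have hw := K.atomAux_nonneg false j (k + 1) _ hz'
    obtain ⟨x, hxw, hxneg⟩ := exists_neg _ hw _ hc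
    have step : K.relN ⟨k, c⟩ ⟨k + 1, x⟩ :=
      Or.inl ⟨rfl, mem_support_nPart.mpr hxneg⟩
    obtain ⟨x0, hx0, path⟩ := K.atomAux_false_path j (k + 1) _ hz' x hxw
    obtain ⟨y, hy, heq⟩ := K.cast_support e z x0 hx0
    rw [heq] at path
    exact ⟨y, hy, path.head step⟩

lemma single_one_nonneg {α : Type} [DecidableEq α] (b : α) (t : α) :
    (0 : ℤ) ≤ Finsupp.single b (1 : ℤ) t := by
  classical
  rw [Finsupp.single_apply]
  split <;> simp

lemma atom_true_path (K : ADCB) {m i : ℕ} (b : K.B m) (hi : i ≤ m) (c : K.B i)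
    (hc : c ∈ (K.atom true b i hi).support) :
    Relation.ReflTransGen K.relN ⟨m, b⟩ ⟨i, c⟩ := by
  classical
  rw [atom] at hc
  have e : m = i + (m - i) := by omega
  have hnn : ∀ t, 0 ≤ (Finsupp.single b (1 : ℤ)) t := single_one_nonneg b
  obtain ⟨x, hx, path⟩ :=
    K.atomAux_true_path (m - i) i _ (K.cast_nonneg' e _ hnn) c hc
  obtain ⟨y, hy, heq⟩ := K.cast_support e _ x hx
  rw [Finsupp.support_single_ne_zero b one_ne_zero, Finset.mem_singleton] at hy
  subst hy
  rw [heq] at path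
  exact path

lemma atom_false_path (K : ADCB) {m i : ℕ} (b : K.B m) (hi : i ≤ m) (c : K.B i)
    (hc : c ∈ (K.atom false b i hi).support) :
    Relation.ReflTransGen K.relN ⟨i, c⟩ ⟨m, b⟩ := by
  classical
  rw [atom] at hc
  have e : m = i + (m - i) := by omega
  have hnn : ∀ t, 0 ≤ (Finsupp.single b (1 : ℤ)) t := single_one_nonneg b
  obtain ⟨x, hx, path⟩ :=
    K.atomAux_false_path (m - i) i _ (K.cast_nonneg' e _ hnn) c hc
  obtain ⟨y, hy, heq⟩ := K.cast_support e _ x hx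
  rw [Finsupp.support_single_ne_zero b one_ne_zero, Finset.mem_singleton] at hy
  subst hy
  rw [heq] at path
  exact path

end ADCB

/-- **Steiner.** A strongly loop-free basis is loop-free. -/
theorem ADCB.stronglyLoopFree_loopFree (K : ADCB) (h : K.StronglyLoopFree) : K.LoopFree := by
  intro i a b hab hba
  have key : ∀ u v : Σ n, K.B n, K.relI i u v → Relation.ReflTransGen K.relN u v := by
    rintro ⟨n, u⟩ ⟨p, v⟩ ⟨hu, hv, c, hc1, hc2⟩
    exact (K.atom_true_path u hu.le c hc1).trans (K.atom_false_path v hv.le c hc2)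
  have lift : ∀ u v : Σ n, K.B n, Relation.ReflTransGen (K.relI i) u v →
      Relation.ReflTransGen K.relN u v := by
    intro u v huv
    have := Relation.ReflTransGen.mono (r := K.relI i) (key) _ _ huv
    rwa [Relation.reflTransGen_idem] at this
  exact h a b (lift a b hab) (lift b a hba)
end
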